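/- Let P be the balanced parentheses string of an ordinal tree T (opening = 1, closing = 0) and π(1)=1, π(0)=−1. For a node x represented by the index of its opening parenthesis, with close(x) the index of its matching closing parenthesis, the number of children of x equals the number of positions k in [x+1, close(x)−1] at which the prefix sum π(P)[k] attains its minimum over that range, i.e. degree(x) = min_count(π(P), x+1, close(x)−1). -/

import Mathlib

/-- Ordinal (rooted, ordered) trees: a node with a list of children subtrees. -/
inductive OTree where
  | node : List OTree → OTree

/-- Balanced parentheses (DFS) encoding: `1` (`true`) = opening parenthesis,
`0` (`false`) = closing parenthesis. -/
def bp : OTree → List Bool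
  | .node ts => true :: (ts.attach.map (fun ⟨t, _⟩ => bp t)).flatten ++ [false]

/-- `π(1) = 1`, `π(0) = -1`. -/
def piB (b : Bool) : ℤ := if b then 1 else -1

/-- `π(P)[k]`: prefix sum of `π` over the first `k` characters of `P` (1-indexed). -/
def lpsum (P : List Bool) (k : ℕ) : ℤ := ((P.take k).map piB).sum

lemma bp_node (ts : List OTree) : bp (.node ts) = true :: (ts.map bp).flatten ++ [false] := by
  rw [bp]; congr 1; simp

lemma lpsum_nil (k : ℕ) : lpsum [] k = 0 := by simp [lpsum]
lemma lpsum_zero (A : List Bool) : lpsum A 0 = 0 := by simp [lpsum]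
lemma lpsum_cons (b : Bool) (A : List Bool) (k : ℕ) :
    lpsum (b :: A) (k+1) = piB b + lpsum A k := by simp [lpsum]
lemma lpsum_append (A B : List Bool) (k : ℕ) :
    lpsum (A ++ B) k = lpsum A k + lpsum B (k - A.length) := by
  simp [lpsum, List.take_append]
lemma lpsum_of_le (A : List Bool) {k : ℕ} (h : A.length ≤ k) :
    lpsum A k = lpsum A A.length := by
  simp [lpsum, List.take_of_length_le h]

def Good (L : List Bool) : Prop :=
  2 ≤ L.length ∧ lpsum L L.length = 0 ∧ ∀ k, 1 ≤ k → k < L.length → 1 ≤ lpsum L k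

lemma good_nonneg {L : List Bool} (h : Good L) (k : ℕ) : 0 ≤ lpsum L k := by
  rcases Nat.lt_or_ge k L.length with hk | hk
  · rcases Nat.eq_zero_or_pos k with rfl | hk1
    · simp [lpsum_zero]
    · linarith [h.2.2 k hk1 hk]
  · rw [lpsum_of_le _ hk, h.2.1]

lemma flat_nonneg {ls : List (List Bool)} (h : ∀ L ∈ ls, Good L) (k : ℕ) :
    0 ≤ lpsum ls.flatten k := by
  induction ls generalizing k with
  | nil => simp [lpsum_nil]
  | cons L ls ih =>
    rw [List.flatten_cons, lpsum_append]
    have h1 := good_nonneg (h L (by simp)) k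
    have h2 := ih (fun L hL => h L (by simp [hL])) (k - L.length)
    linarith

lemma flat_total {ls : List (List Bool)} (h : ∀ L ∈ ls, Good L) :
    lpsum ls.flatten ls.flatten.length = 0 := by
  induction ls with
  | nil => simp [lpsum_nil]
  | cons L ls ih =>
    rw [List.flatten_cons, lpsum_append, List.length_append]
    rw [lpsum_of_le _ (by omega), (h L (by simp)).2.1]
    rw [Nat.add_sub_cancel_left] at *
    rw [ih (fun L hL => h L (by simp [hL]))]
    ring

theorem bp_good : ∀ t : OTree, Good (bp t)
  | .node ts => by
    have ih : ∀ t ∈ ts, Good (bp t) := fun t ht => bp_good t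
    have ihm : ∀ L ∈ ts.map bp, Good L := by
      intro L hL; rcases List.mem_map.mp hL with ⟨t, ht, rfl⟩; exact ih t ht
    rw [bp_node]
    have hS : ((ts.map bp).flatten : List Bool) = (ts.map bp).flatten := rfl
    refine ⟨by simp, ?_, ?_⟩
    · have : (true :: (ts.map bp).flatten ++ [false]).length = ((ts.map bp).flatten.length + 1) + 1 := by simp
      rw [this]
      rw [show (true :: (ts.map bp).flatten ++ [false]) = true :: ((ts.map bp).flatten ++ [false]) by simp]
      rw [lpsum_cons, lpsum_append, lpsum_of_le (ts.map bp).flatten (by omega), flat_total ihm,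
        Nat.add_sub_cancel_left]
      simp [lpsum, piB]
    · intro k hk1 hk2
      simp only [List.length_cons, List.length_append, List.length_nil] at hk2
      obtain ⟨j, rfl⟩ : ∃ j, k = j + 1 := ⟨k - 1, by omega⟩
      rw [show (true :: (ts.map bp).flatten ++ [false]) = true :: ((ts.map bp).flatten ++ [false]) by simp]
      rw [lpsum_cons, lpsum_append, show j - (ts.map bp).flatten.length = 0 by omega, lpsum_zero]
      have := flat_nonneg ihm j
      simp [piB]; linarith
termination_by t => sizeOf t
decreasing_by
  have := List.sizeOf_lt_of_mem ht
  simp only [OTree.node.sizeOf_spec]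
  omega

lemma flat_count : ∀ ts : List OTree,
    ((Finset.Icc 1 ((ts.map bp).flatten).length).filter
      (fun k => lpsum ((ts.map bp).flatten) k = 0)).card = ts.length
  | [] => by simp
  | t :: ts => by
    have hA := bp_good t
    have hA1 : 2 ≤ (bp t).length := hA.1
    have ihm : ∀ L ∈ ts.map bp, Good L := by
      intro L hL; rcases List.mem_map.mp hL with ⟨t', _, rfl⟩; exact bp_good t'
    set A := bp t with hAdef
    set S := (ts.map bp).flatten with hSdef
    have hflat : ((t :: ts).map bp).flatten = A ++ S := by simp [A, S]
    have hlen : ((t :: ts).map bp).flatten.length = A.length + S.length := by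
      rw [hflat, List.length_append]
    have key : (Finset.Icc 1 (A.length + S.length)).filter (fun k => lpsum (A ++ S) k = 0)
        = insert A.length ((Finset.Icc 1 S.length).filter (fun j => lpsum S j = 0)
            |>.image (fun j => A.length + j)) := by
      ext k
      simp only [Finset.mem_filter, Finset.mem_Icc, Finset.mem_insert, Finset.mem_image]
      constructor
      · rintro ⟨⟨hk1, hk2⟩, hz⟩
        rcases le_or_gt k A.length with hle | hgt
        · left
          by_contra hne
          have hlt : k < A.length := lt_of_le_of_ne hle hne
          have := hA.2.2 k hk1 hlt
          rw [lpsum_append, show k - A.length = 0 by omega, lpsum_zero] at hz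
          omega
        · right
          refine ⟨k - A.length, ⟨⟨by omega, by omega⟩, ?_⟩, by omega⟩
          rw [lpsum_append, lpsum_of_le A (by omega), hA.2.1] at hz
          linarith
      · rintro (rfl | ⟨j, ⟨⟨hj1, hj2⟩, hz⟩, rfl⟩)
        · refine ⟨⟨by omega, by omega⟩, ?_⟩
          rw [lpsum_append, Nat.sub_self, lpsum_zero, lpsum_of_le A le_rfl, hA.2.1]
          ring
        · refine ⟨⟨by omega, by omega⟩, ?_⟩
          rw [lpsum_append, lpsum_of_le A (by omega), hA.2.1,
            show A.length + j - A.length = j by omega, hz]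
          ring
    rw [hlen]
    have : ∀ k, lpsum (((t :: ts).map bp).flatten) k = lpsum (A ++ S) k := by
      intro k; rw [hflat]
    simp only [this]
    rw [key, Finset.card_insert_of_notMem, Finset.card_image_of_injective _
      (fun a b h => by omega), flat_count ts, List.length_cons]
    intro hmem
    rcases Finset.mem_image.mp hmem with ⟨j, hj, hje⟩
    have := (Finset.mem_filter.mp hj).1
    simp only [Finset.mem_Icc] at this
    omega

/-- Minimum of `A` over positions in `[a,b]`. -/
noncomputable def minIcc (A : ℕ → ℤ) (a b : ℕ) : ℤ := sInf (A '' Set.Icc a b)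

/-- `min_count(A,i,j) = |{i ≤ k ≤ j : A[k] = min(A[i..j])}|`. -/
noncomputable def minCount (A : ℕ → ℤ) (a b : ℕ) : ℕ :=
  {p | p ∈ Set.Icc a b ∧ A p = minIcc A a b}.ncard

/-- `degree(x) = min_count(π(P), x+1, close(x)-1)`: for a non-leaf node `x` of an
ordinal tree whose subtree has children list `ts` and whose opening parenthesis is at
position `x = |u| + 1` of the balanced parentheses string `P = u ++ bp(node ts) ++ w`
(so its matching closing parenthesis is at `close(x) = |u| + |bp(node ts)|`), the
number of children of `x` equals the number of positions in `[x+1, close(x)-1]`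
attaining the minimum prefix sum `π(P)[k]` over that range. -/
theorem stmt9 (u w : List Bool) (ts : List OTree) (hts : ts ≠ []) :
    let P := u ++ bp (OTree.node ts) ++ w
    let x := u.length + 1
    let c := u.length + (bp (OTree.node ts)).length
    minCount (lpsum P) (x + 1) (c - 1) = ts.length := by
  intro P x c
  have ihm : ∀ L ∈ ts.map bp, Good L := by
    intro L hL; rcases List.mem_map.mp hL with ⟨t', _, rfl⟩; exact bp_good t'
  set S := (ts.map bp).flatten with hSdef
  have htot : lpsum S S.length = 0 := flat_total ihm
  have hnn : ∀ k, 0 ≤ lpsum S k := flat_nonneg ihm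
  have hbp : bp (OTree.node ts) = true :: S ++ [false] := bp_node ts
  have hlen : (bp (OTree.node ts)).length = S.length + 2 := by
    rw [hbp]; simp only [List.length_cons, List.length_append, List.length_nil]
  have hS2 : 2 ≤ S.length := by
    rcases ts with _ | ⟨t, ts'⟩
    · exact absurd rfl hts
    · have := (bp_good t).1
      have : S.length = (bp t).length + ((ts'.map bp).flatten).length := by
        rw [hSdef]; simp
      omega
  have hx1 : x + 1 = u.length + 2 := by simp [x]
  have hc : c - 1 = u.length + 1 + S.length := by
    simp only [c, hlen]; omega
  set s0 := lpsum u u.length with hs0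
  have hval : ∀ j, 1 ≤ j → j ≤ S.length →
      lpsum P (u.length + 1 + j) = s0 + 1 + lpsum S j := by
    intro j hj1 hj2
    have hP : P = u ++ (true :: ((S ++ [false]) ++ w)) := by
      simp only [P, hbp]; simp
    rw [hP, lpsum_append, lpsum_of_le u (by omega),
      show u.length + 1 + j - u.length = j + 1 by omega, lpsum_cons, lpsum_append,
      lpsum_append, show j - S.length = 0 by omega, lpsum_zero,
      show j - (S ++ [false]).length = 0 by simp; omega, lpsum_zero]
    simp [piB]; ring
  have hparam : ∀ k, k ∈ Set.Icc (x+1) (c-1) ↔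
      ∃ j, 1 ≤ j ∧ j ≤ S.length ∧ k = u.length + 1 + j := by
    intro k
    simp only [Set.mem_Icc, hx1, hc]
    constructor
    · rintro ⟨h1, h2⟩; exact ⟨k - (u.length + 1), by omega, by omega, by omega⟩
    · rintro ⟨j, hj1, hj2, rfl⟩; omega
  have hmin : minIcc (lpsum P) (x+1) (c-1) = s0 + 1 := by
    unfold minIcc
    apply IsLeast.csInf_eq
    constructor
    · refine ⟨u.length + 1 + S.length, (hparam _).mpr ⟨S.length, by omega, le_rfl, rfl⟩, ?_⟩
      rw [hval S.length (by omega) le_rfl, htot]; ring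
    · rintro y ⟨k, hk, rfl⟩
      rcases (hparam k).mp hk with ⟨j, hj1, hj2, rfl⟩
      rw [hval j hj1 hj2]
      linarith [hnn j]
  unfold minCount
  rw [hmin]
  have hsetfin : {p | p ∈ Set.Icc (x+1) (c-1) ∧ lpsum P p = s0 + 1} =
      ↑((Finset.Icc (x+1) (c-1)).filter (fun p => lpsum P p = s0 + 1)) := by
    ext p; simp
  rw [hsetfin, Set.ncard_coe_finset]
  have himg : (Finset.Icc (x+1) (c-1)).filter (fun p => lpsum P p = s0 + 1)
      = ((Finset.Icc 1 S.length).filter (fun j => lpsum S j = 0)).image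
          (fun j => u.length + 1 + j) := by
    ext k
    simp only [Finset.mem_filter, Finset.mem_Icc, Finset.mem_image, hx1, hc]
    constructor
    · rintro ⟨⟨h1, h2⟩, hz⟩
      refine ⟨k - (u.length + 1), ⟨⟨by omega, by omega⟩, ?_⟩, by omega⟩
      have hk : k = u.length + 1 + (k - (u.length + 1)) := by omega
      rw [hk, hval _ (by omega) (by omega)] at hz
      linarith
    · rintro ⟨j, ⟨⟨hj1, hj2⟩, hz⟩, rfl⟩
      refine ⟨⟨by omega, by omega⟩, ?_⟩
      rw [hval j hj1 hj2, hz]; ring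
  rw [himg, Finset.card_image_of_injective _ (fun a b h => by omega)]
  exact flat_count ts
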